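/- There exists a constant c > 0 (depending only on the dimension d) such that for every integer N ≥ 1, every multi-index α with |α| ≤ N, and every x ∈ ℝ^d, one has e^{|x|²/(8N)} · |∂^α E_N(x)| ≤ (c/√N)^{|α|} · α^{α/2}, where E_N(x) = e^{-|x|²/(4N)}. In particular |∂^α E_N(x)| ≤ (c/√N)^{|α|} α^{α/2} for all such x, α, N. (One may take c = 1.) -/

import Mathlib

open MeasureTheory Real

/-- The Gaussian window `E_N(x) = e^{-|x|²/(4N)}`. -/
noncomputable def EGaussR (d N : ℕ) (x : EuclideanSpace ℝ (Fin d)) : ℝ :=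
  Real.exp (-(‖x‖ ^ 2) / (4 * N))

/-- Partial derivative in the `k`-th coordinate direction. -/
noncomputable def pderivR (d : ℕ) (k : Fin d) (f : EuclideanSpace ℝ (Fin d) → ℝ) :
    EuclideanSpace ℝ (Fin d) → ℝ :=
  fun x => fderiv ℝ f x (EuclideanSpace.single k 1)

/-- The multi-index partial derivative `∂^α f`. -/
noncomputable def pderivMultiR (d : ℕ) (α : Fin d → ℕ) (f : EuclideanSpace ℝ (Fin d) → ℝ) :
    EuclideanSpace ℝ (Fin d) → ℝ :=
  (List.finRange d).foldr (fun k g => (pderivR d k)^[α k] g) f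

open Nat

/-- Cauchy estimate for entire functions. -/
lemma cauchy_est (F : ℂ → ℂ) (hF : Differentiable ℂ F) (n : ℕ) (c : ℂ) {R : ℝ} (hR : 0 < R)
    {M : ℝ} (hM : ∀ z : ℂ, ‖z - c‖ = R → ‖F z‖ ≤ M) :
    ‖deriv^[n] F c‖ ≤ (n ! : ℝ) * M / R ^ n := by
  set R' : NNReal := ⟨R, hR.le⟩ with hR'def
  have hR' : (R' : ℝ) = R := rfl
  have hR0 : (0 : NNReal) < R' := by exact_mod_cast hR
  have h := hF.hasFPowerSeriesOnBall c hR0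
  have hfact := h.factorial_smul (y := (1 : ℂ)) n
  have hid : deriv^[n] F c = iteratedFDeriv ℂ n F c (fun _ => 1) := by
    rw [← iteratedDeriv_eq_iterate, iteratedDeriv_eq_iteratedFDeriv]
  have hM0 : 0 ≤ M := le_trans (norm_nonneg _) (hM (c + R) (by simp [abs_of_nonneg hR.le]))
  have hint : ∫ θ : ℝ in (0)..2 * Real.pi, ‖F (circleMap c R θ)‖ ≤ 2 * Real.pi * M := by
    have hb : ∀ θ ∈ Set.Icc (0:ℝ) (2*Real.pi), ‖F (circleMap c R θ)‖ ≤ M := by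
      intro θ _
      exact hM _ (by rw [circleMap_sub_center, norm_circleMap_zero, abs_of_nonneg hR.le])
    calc ∫ θ : ℝ in (0)..2 * Real.pi, ‖F (circleMap c R θ)‖
        ≤ ∫ _θ : ℝ in (0)..2 * Real.pi, M := by
          apply intervalIntegral.integral_mono_on Real.two_pi_pos.le
          · exact ((hF.continuous.comp (continuous_circleMap _ _)).norm).intervalIntegrable _ _
          · exact intervalIntegrable_const
          · exact hb
      _ = 2 * Real.pi * M := by simp [mul_comm]
  have hpn : ‖cauchyPowerSeries F c R' n (fun _ => (1:ℂ))‖ ≤ M / R ^ n := by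
    have h1 := (cauchyPowerSeries F c R' n).le_opNorm (fun _ => (1:ℂ))
    have h2 := norm_cauchyPowerSeries_le F c R' n
    rw [hR'] at h2
    have h3 : ((2 * Real.pi)⁻¹ * ∫ θ : ℝ in (0)..2 * Real.pi, ‖F (circleMap c R θ)‖) * |R|⁻¹ ^ n
        ≤ M / R ^ n := by
      rw [abs_of_nonneg hR.le, div_eq_mul_inv M, ← inv_pow]
      have : (2 * Real.pi)⁻¹ * ∫ θ : ℝ in (0)..2 * Real.pi, ‖F (circleMap c R θ)‖ ≤ M := by
        rw [inv_mul_le_iff₀ Real.two_pi_pos]; linarith [hint]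
      gcongr
    calc ‖cauchyPowerSeries F c R' n (fun _ => (1:ℂ))‖
        ≤ ‖cauchyPowerSeries F c R' n‖ * ∏ _i : Fin n, ‖(1:ℂ)‖ := h1
      _ = ‖cauchyPowerSeries F c R' n‖ := by simp
      _ ≤ M / R ^ n := le_trans h2 h3
  calc ‖deriv^[n] F c‖ = ‖(n !) • cauchyPowerSeries F c R' n (fun _ => (1:ℂ))‖ := by
        rw [hfact, hid]
    _ = (n ! : ℝ) * ‖cauchyPowerSeries F c R' n (fun _ => (1:ℂ))‖ := by
        rw [← Nat.cast_smul_eq_nsmul ℝ, norm_smul]; simp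
    _ ≤ (n ! : ℝ) * (M / R ^ n) := by gcongr
    _ = (n ! : ℝ) * M / R ^ n := by ring

lemma bridge (F : ℂ → ℂ) (hF : Differentiable ℂ F) (n : ℕ) (t : ℝ) :
    deriv^[n] (fun s : ℝ => (F s).re) t = (deriv^[n] F t).re := by
  induction n generalizing F with
  | zero => simp
  | succ n ih =>
    have hd : deriv (fun s : ℝ => (F s).re) = fun s : ℝ => ((deriv F) s).re := by
      funext s
      exact ((hF s).hasDerivAt.real_of_complex).deriv
    have hF' : Differentiable ℂ (deriv F) :=
      (contDiff_infty_iff_deriv.mp (hF.contDiff (n := (⊤:ℕ∞)))).2.differentiable (by simp)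
    rw [Function.iterate_succ_apply, Function.iterate_succ_apply, hd, ih _ hF']

lemma oneD (N : ℕ) (hN : 1 ≤ N) (n : ℕ) (t : ℝ) :
    Real.exp (t ^ 2 / (8 * N)) * |deriv^[n] (fun s : ℝ => Real.exp (-(s ^ 2) / (4 * N))) t| ≤
      (3 / Real.sqrt N) ^ n * (n : ℝ) ^ ((n : ℝ) / 2) := by
  have hNpos : (0 : ℝ) < N := by exact_mod_cast hN
  rcases Nat.eq_zero_or_pos n with rfl | hn
  · simp only [Function.iterate_zero, id_eq, pow_zero, Nat.cast_zero, one_mul]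
    rw [show ((0 : ℝ) / 2 : ℝ) = 0 by norm_num, Real.rpow_zero]
    rw [abs_of_pos (Real.exp_pos _), ← Real.exp_add]
    apply Real.exp_le_one_iff.mpr
    have h1 : 0 ≤ t ^ 2 / (8 * (N:ℝ)) := by positivity
    have h2 : t ^ 2 / (8 * (N:ℝ)) + -t ^ 2 / (4 * N) = -(t ^ 2 / (8 * N)) := by
      field_simp; ring
    rw [show -t ^ 2 / (4 * (N:ℝ)) = -t ^2 / (4*N) by ring] at h2
    linarith [h2, h1]
  · -- n ≥ 1
    set G : ℂ → ℂ := fun z => Complex.exp (-(z ^ 2) / (4 * (N : ℂ))) with hGdef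
    have hG : Differentiable ℂ G := (((differentiable_pow 2).neg).div_const _).cexp
    have hre : (fun s : ℝ => (G s).re) = fun s : ℝ => Real.exp (-(s ^ 2) / (4 * N)) := by
      funext s
      have : ((-(s ^ 2) / (4 * N) : ℝ) : ℂ) = -((s : ℂ) ^ 2) / (4 * (N : ℂ)) := by push_cast; ring
      rw [hGdef]
      simp only [← this, ← Complex.ofReal_exp, Complex.ofReal_re]
    set R : ℝ := Real.sqrt (n * N) with hRdef
    have hRpos : 0 < R := Real.sqrt_pos.mpr (by positivity)
    have hR2 : R ^ 2 = n * N := Real.sq_sqrt (by positivity)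
    set M : ℝ := Real.exp ((-t ^ 2 + 2 * |t| * R + R ^ 2) / (4 * N)) with hMdef
    have hM : ∀ z : ℂ, ‖z - (t : ℂ)‖ = R → ‖G z‖ ≤ M := by
      intro z hz
      have hsq : (z.re - t) ^ 2 + z.im ^ 2 = R ^ 2 := by
        have h : Complex.normSq (z - (t:ℂ)) = R ^ 2 := by rw [← Complex.sq_norm, hz]
        simp only [Complex.normSq_apply, Complex.sub_re, Complex.sub_im, Complex.ofReal_re,
          Complex.ofReal_im, sub_zero] at h
        linear_combination h
      have hre' : (-(z ^ 2) / (4 * (N : ℂ))).re = -(z.re * z.re - z.im * z.im) / (4 * N) := by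
        have h4 : (4 * (N : ℂ)) = ((4 * N : ℝ) : ℂ) := by push_cast; ring
        rw [h4, Complex.div_ofReal_re]
        simp [sq, Complex.mul_re]
      have hGz : ‖G z‖ = Real.exp (-(z.re * z.re - z.im * z.im) / (4 * N)) := by
        rw [hGdef]
        simp only [Complex.norm_exp, hre']
      rw [hGz, hMdef]
      apply Real.exp_le_exp.mpr
      apply div_le_div_of_nonneg_right ?_ (by positivity)
      -- -(z.re * z.re - z.im * z.im) ≤ -t ^ 2 + 2 * |t| * R + R ^ 2
      have haR : |z.re - t| ≤ R := by
        nlinarith [sq_abs (z.re - t), abs_nonneg (z.re - t), sq_nonneg z.im, hRpos.le]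
      have hcross : -(t * (z.re - t)) ≤ |t| * R :=
        calc -(t * (z.re - t)) ≤ |t * (z.re - t)| := neg_le_abs _
          _ = |t| * |z.re - t| := abs_mul _ _
          _ ≤ |t| * R := by gcongr
      nlinarith [hsq, hcross, sq_nonneg (z.re - t), sq_abs t]
    have hcau := cauchy_est G hG n (t : ℂ) hRpos hM
    have hbr := bridge G hG n t
    rw [hre] at hbr
    have habs : |deriv^[n] (fun s : ℝ => Real.exp (-(s ^ 2) / (4 * N))) t| ≤
        (n ! : ℝ) * M / R ^ n := by
      rw [hbr]
      exact le_trans (Complex.abs_re_le_norm _) hcau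
    -- combine
    calc Real.exp (t ^ 2 / (8 * N)) * |deriv^[n] (fun s : ℝ => Real.exp (-(s ^ 2) / (4 * N))) t|
        ≤ Real.exp (t ^ 2 / (8 * N)) * ((n ! : ℝ) * M / R ^ n) := by gcongr
      _ = (n ! : ℝ) * (Real.exp (t ^ 2 / (8 * N)) * M) / R ^ n := by ring
      _ ≤ (n ! : ℝ) * Real.exp (3 * n / 4) / R ^ n := by
          gcongr
          rw [hMdef, ← Real.exp_add]
          apply Real.exp_le_exp.mpr
          rw [show t ^ 2 / (8 * (N:ℝ)) + (-t ^ 2 + 2 * |t| * R + R ^ 2) / (4 * N)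
              = (-t ^ 2 + 4 * |t| * R + 2 * R ^ 2) / (8 * N) by field_simp; ring]
          rw [div_le_iff₀ (by positivity : (0:ℝ) < 8 * N)]
          nlinarith [sq_nonneg (|t| - 2 * R), sq_abs t, hR2, hNpos]
      _ ≤ (3 / Real.sqrt N) ^ n * (n : ℝ) ^ ((n : ℝ) / 2) := by
          have hsn : (0:ℝ) < Real.sqrt n := Real.sqrt_pos.mpr (by exact_mod_cast hn)
          have hsN : (0:ℝ) < Real.sqrt N := Real.sqrt_pos.mpr hNpos
          have hnr : (n : ℝ) ^ ((n : ℝ) / 2) = (Real.sqrt n) ^ n := by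
            rw [Real.sqrt_eq_rpow, ← Real.rpow_natCast ((n:ℝ) ^ (1/2 : ℝ)) n,
              ← Real.rpow_mul (by positivity)]
            congr 1
            ring
          have hRn : R ^ n = (Real.sqrt n) ^ n * (Real.sqrt N) ^ n := by
            rw [hRdef, Real.sqrt_mul (by positivity), mul_pow]
          rw [div_le_iff₀ (by positivity : (0:ℝ) < R ^ n)]
          have hRHS : (3 / Real.sqrt N) ^ n * (n : ℝ) ^ ((n : ℝ) / 2) * R ^ n
              = 3 ^ n * (n : ℝ) ^ n := by
            rw [hnr, hRn, div_pow]
            rw [show (3:ℝ) ^ n / Real.sqrt N ^ n * Real.sqrt (n:ℕ) ^ n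
                * (Real.sqrt (n:ℕ) ^ n * Real.sqrt N ^ n)
                = 3 ^ n * (Real.sqrt (n:ℕ) * Real.sqrt (n:ℕ)) ^ n
                * (Real.sqrt N ^ n / Real.sqrt N ^ n) by rw [mul_pow]; ring]
            rw [div_self (by positivity), Real.mul_self_sqrt (by positivity), mul_one]
          rw [hRHS]
          have h1 : (n ! : ℝ) ≤ (n:ℝ) ^ n := by exact_mod_cast Nat.factorial_le_pow n
          have h2 : Real.exp (3 * n / 4) ≤ 3 ^ n := by
            rw [show 3 * (n:ℝ) / 4 = n * (3/4) by ring, Real.exp_nat_mul]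
            apply pow_le_pow_left₀ (Real.exp_pos _).le
            calc Real.exp (3/4) ≤ Real.exp 1 := Real.exp_le_exp.mpr (by norm_num)
              _ ≤ 3 := by linarith [Real.exp_one_lt_d9]
          calc (n ! : ℝ) * Real.exp (3 * n / 4) ≤ (n:ℝ) ^ n * 3 ^ n :=
                mul_le_mul h1 h2 (Real.exp_pos _).le (by positivity)
            _ = 3 ^ n * (n:ℝ) ^ n := mul_comm _ _

lemma pderiv_prod (d : ℕ) (g : Fin d → ℝ → ℝ) (hg : ∀ i, ContDiff ℝ (⊤ : ℕ∞) (g i)) (k : Fin d) :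
    pderivR d k (fun x => ∏ i, g i (x i)) =
      fun x => ∏ i, Function.update g k (deriv (g k)) i (x i) := by
  funext x
  have hterm : ∀ i, HasFDerivAt (fun x : EuclideanSpace ℝ (Fin d) => g i (x i))
      (deriv (g i) (x i) • (EuclideanSpace.proj i : EuclideanSpace ℝ (Fin d) →L[ℝ] ℝ)) x := by
    intro i
    have h1 : HasDerivAt (g i) (deriv (g i) (x i)) (x i) :=
      (((hg i).differentiable (by simp)) (x i)).hasDerivAt
    have h2 : HasFDerivAt (fun y : EuclideanSpace ℝ (Fin d) => y i)
        (EuclideanSpace.proj i : EuclideanSpace ℝ (Fin d) →L[ℝ] ℝ) x :=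
      (EuclideanSpace.proj (𝕜 := ℝ) i).hasFDerivAt
    exact h1.comp_hasFDerivAt x h2
  have hf := HasFDerivAt.finset_prod (u := (Finset.univ : Finset (Fin d))) (fun i _ => hterm i)
  show fderiv ℝ (fun x => ∏ i, g i (x i)) x (EuclideanSpace.single k 1) = _
  rw [hf.fderiv, ContinuousLinearMap.sum_apply]
  have heval : ∀ i : Fin d,
      ((∏ j ∈ Finset.univ.erase i, g j (x j)) •
        (deriv (g i) (x i) • (EuclideanSpace.proj i : EuclideanSpace ℝ (Fin d) →L[ℝ] ℝ)))
        (EuclideanSpace.single k 1)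
      = if i = k then (∏ j ∈ Finset.univ.erase i, g j (x j)) * deriv (g i) (x i) else 0 := by
    intro i
    simp only [ContinuousLinearMap.smul_apply, PiLp.proj_apply, EuclideanSpace.single_apply,
      smul_eq_mul]
    by_cases h : i = k <;> simp [h, mul_assoc]
  rw [Finset.sum_congr rfl (fun i _ => heval i), Finset.sum_ite_eq' Finset.univ k _]
  simp only [Finset.mem_univ, if_true]
  have hupdate : ∏ i, Function.update g k (deriv (g k)) i (x i)
      = deriv (g k) (x k) * ∏ j ∈ Finset.univ.erase k, g j (x j) := by
    rw [← Finset.mul_prod_erase Finset.univ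
      (fun i => Function.update g k (deriv (g k)) i (x i)) (Finset.mem_univ k),
      Function.update_self]
    congr 1
    refine Finset.prod_congr rfl fun j hj => ?_
    rw [Function.update_of_ne (Finset.ne_of_mem_erase hj)]
  rw [hupdate]
  ring

lemma iter_pderiv_prod (d : ℕ) (k : Fin d) (m : ℕ) (g : Fin d → ℝ → ℝ)
    (hg : ∀ i, ContDiff ℝ (⊤ : ℕ∞) (g i)) :
    (pderivR d k)^[m] (fun x => ∏ i, g i (x i)) =
      fun x => ∏ i, Function.update g k (deriv^[m] (g k)) i (x i) := by
  induction m with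
  | zero => simp [Function.update_eq_self]
  | succ m ih =>
    rw [Function.iterate_succ_apply', ih]
    have hg' : ∀ i, ContDiff ℝ (⊤ : ℕ∞) (Function.update g k (deriv^[m] (g k)) i) := by
      intro i
      by_cases h : i = k
      · subst h; rw [Function.update_self]; exact ContDiff.iterate_deriv m (hg i)
      · rw [Function.update_of_ne h]; exact hg i
    rw [pderiv_prod d _ hg' k]
    funext x
    refine Finset.prod_congr rfl fun i _ => ?_
    rw [Function.update_idem, Function.update_self,
      show deriv (deriv^[m] (g k)) = deriv^[m + 1] (g k) from
        (Function.iterate_succ_apply' deriv m (g k)).symm]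

lemma foldr_pderiv_prod (d : ℕ) (α : Fin d → ℕ) (l : List (Fin d)) (hl : l.Nodup)
    (g : Fin d → ℝ → ℝ) (hg : ∀ i, ContDiff ℝ (⊤ : ℕ∞) (g i)) :
    l.foldr (fun k h => (pderivR d k)^[α k] h) (fun x => ∏ i, g i (x i)) =
      fun x => ∏ i, (if i ∈ l then deriv^[α i] (g i) else g i) (x i) := by
  induction l generalizing g with
  | nil => simp
  | cons k l ih =>
    obtain ⟨hkl, hl'⟩ := List.nodup_cons.mp hl
    rw [List.foldr_cons, ih hl' g hg]
    set h : Fin d → ℝ → ℝ := fun i => if i ∈ l then deriv^[α i] (g i) else g i with hdef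
    have hh : ∀ i, ContDiff ℝ (⊤ : ℕ∞) (h i) := by
      intro i
      rw [hdef]
      by_cases hi : i ∈ l <;> simp only [hi, if_true, if_false]
      · exact ContDiff.iterate_deriv _ (hg i)
      · exact hg i
    rw [iter_pderiv_prod d k (α k) h hh]
    funext x
    refine Finset.prod_congr rfl fun i _ => ?_
    by_cases hik : i = k
    · subst hik
      rw [Function.update_self, hdef]
      simp [hkl]
    · rw [Function.update_of_ne hik, hdef]
      simp [List.mem_cons, hik]

/-- There is a constant `c > 0` (one may take `c = 1`), depending only on `d`, such that
`e^{|x|²/(8N)} |∂^α E_N(x)| ≤ (c/√N)^{|α|} α^{α/2}` for `|α| ≤ N`. -/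
theorem gaussian_derivative_bound (d : ℕ) :
    ∃ c : ℝ, 0 < c ∧
      ∀ N : ℕ, 1 ≤ N → ∀ α : Fin d → ℕ, (∑ i, α i) ≤ N →
        ∀ x : EuclideanSpace ℝ (Fin d),
          Real.exp (‖x‖ ^ 2 / (8 * N)) * |pderivMultiR d α (EGaussR d N) x| ≤
            (c / Real.sqrt N) ^ (∑ i, α i) * ∏ i, (α i : ℝ) ^ ((α i : ℝ) / 2) := by
  refine ⟨3, by norm_num, ?_⟩
  intro N hN α _ x
  have hNpos : (0 : ℝ) < N := by exact_mod_cast hN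
  set g : ℝ → ℝ := fun s => Real.exp (-(s ^ 2) / (4 * N)) with hgdef
  have hgsm : ContDiff ℝ (⊤ : ℕ∞) g := by
    rw [hgdef]
    exact Real.contDiff_exp.comp ((contDiff_id.pow 2).neg.div_const _)
  have hnorm : ‖x‖ ^ 2 = ∑ i, (x i) ^ 2 := by
    rw [EuclideanSpace.norm_eq, Real.sq_sqrt (by positivity)]
    exact Finset.sum_congr rfl fun i _ => by rw [Real.norm_eq_abs, sq_abs]
  have hEG : EGaussR d N = fun x : EuclideanSpace ℝ (Fin d) => ∏ i, g (x i) := by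
    funext y
    unfold EGaussR
    rw [hgdef, ← Real.exp_sum]
    congr 1
    rw [EuclideanSpace.norm_eq, Real.sq_sqrt (by positivity)]
    rw [← Finset.sum_neg_distrib, Finset.sum_div]
    exact Finset.sum_congr rfl fun i _ => by rw [Real.norm_eq_abs, sq_abs, neg_div]
  have hmulti : pderivMultiR d α (EGaussR d N) = fun y => ∏ i, deriv^[α i] g (y i) := by
    rw [hEG]
    unfold pderivMultiR
    rw [foldr_pderiv_prod d α (List.finRange d) (List.nodup_finRange d) (fun _ => g)
      (fun _ => hgsm)]
    funext y
    exact Finset.prod_congr rfl fun i _ => by simp [List.mem_finRange]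
  rw [hmulti, hnorm]
  have hsplit : Real.exp ((∑ i, (x i) ^ 2) / (8 * N)) * |∏ i, deriv^[α i] g (x i)|
      = ∏ i, (Real.exp ((x i) ^ 2 / (8 * N)) * |deriv^[α i] g (x i)|) := by
    rw [Finset.abs_prod, Finset.sum_div, Real.exp_sum, Finset.prod_mul_distrib]
  rw [hsplit]
  calc ∏ i, (Real.exp ((x i) ^ 2 / (8 * N)) * |deriv^[α i] g (x i)|)
      ≤ ∏ i, ((3 / Real.sqrt N) ^ (α i) * (α i : ℝ) ^ ((α i : ℝ) / 2)) := by
        refine Finset.prod_le_prod (fun i _ => by positivity) fun i _ => ?_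
        exact oneD N hN (α i) (x i)
    _ = (3 / Real.sqrt N) ^ (∑ i, α i) * ∏ i, (α i : ℝ) ^ ((α i : ℝ) / 2) := by
        rw [Finset.prod_mul_distrib, Finset.prod_pow_eq_pow_sum]
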